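/- Fix ρ ∈ (0,1), κ > 0, N1 ≥ N2 > 0. Define, for D1, D2 ∈ (0,1) with δ := 1−D1: A(ν) := ((1−ρ²)/(D1·(1−ν²δ) − (ρ−νδ)²))^{1/κ}, P(ν) := N1·(A(ν) − 1) + N2·(((1−ν²δ)/D2)^{1/κ} − 1)·A(ν), P_sep := inf{ P(ν) : ν ∈ [ρ, min(1/ρ, ρ/δ, √((1−D2)/δ))] }, and P_outer := N1·(D1^{−1/κ} − 1) + N2·D1^{−1/κ}·max{0, ((1−ρ²)/D2)^{1/κ} − 1}. Then: (1) for every fixed D2 ∈ (0, 1−ρ²], the ratio P_sep/P_outer (as a function of D1) tends to 1 as D1 → 0 from the right; and (2) for every fixed D1 ∈ (0, 1−ρ²), the ratio P_sep/P_outer (as a function of D2) tends to 1 as D2 → 0 from the right. -/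

import Mathlib

open Real Set Filter



lemma point_lb (ρ κ N1 N2 D1 D2 : ℝ) (hρ0 : 0 < ρ) (hρ1 : ρ < 1) (hκ : 0 < κ)
    (hN2 : 0 < N2) (hN : N2 ≤ N1) (hD1 : 0 < D1) (hD1' : D1 < 1 - ρ ^ 2)
    (hD2 : 0 < D2) (ν : ℝ)
    (hmem : ν ∈ Set.Icc ρ (min (1 / ρ)
      (min (ρ / (1 - D1)) (Real.sqrt ((1 - D2) / (1 - D1)))))) :
    N1 * (D1 ^ (-1 / κ) - 1) + N2 * ((1 - ρ ^ 2) / (D1 * D2)) ^ (1 / κ)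
      - N2 * ((1 - ρ ^ 2) * (1 - D1) / (D1 * (1 - D1 - ρ ^ 2))) ^ (1 / κ) ≤
    N1 * (((1 - ρ ^ 2) /
        (D1 * (1 - ν ^ 2 * (1 - D1)) - (ρ - ν * (1 - D1)) ^ 2)) ^ (1 / κ) - 1)
    + N2 * (((1 - ν ^ 2 * (1 - D1)) / D2) ^ (1 / κ) - 1)
      * ((1 - ρ ^ 2) /
        (D1 * (1 - ν ^ 2 * (1 - D1)) - (ρ - ν * (1 - D1)) ^ 2)) ^ (1 / κ) := by
  obtain ⟨hν1, hν2⟩ := hmem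
  have hδ : 0 < 1 - D1 := by nlinarith [sq_nonneg ρ]
  have hρ2δ : ρ ^ 2 < 1 - D1 := by nlinarith
  have hν0 : 0 < ν := lt_of_lt_of_le hρ0 hν1
  have hνb : ν ≤ ρ / (1 - D1) := le_trans hν2 (le_trans (min_le_right _ _) (min_le_left _ _))
  have hνδρ : ν * (1 - D1) ≤ ρ := by
    rw [← le_div_iff₀ hδ]; exact hνb
  have hρ2 : 0 < 1 - ρ ^ 2 := by nlinarith
  set Dν : ℝ := D1 * (1 - ν ^ 2 * (1 - D1)) - (ρ - ν * (1 - D1)) ^ 2 with hDν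
  have hb1 : 0 < 1 - ν ^ 2 * (1 - D1) := by
    have h := mul_le_mul hνδρ hνδρ (by positivity) hρ0.le
    nlinarith
  have hkey : D1 * (1 - D1 - ρ ^ 2) ≤ Dν * (1 - D1) := by
    have h1 : 0 ≤ (1 - D1) * ((ν - ρ) * (ρ - ν * (1 - D1))) := by
      apply mul_nonneg hδ.le
      exact mul_nonneg (by linarith) (by linarith)
    have h2 : 0 ≤ D1 * (ρ * (ρ - ν * (1 - D1))) := by
      apply mul_nonneg hD1.le
      exact mul_nonneg hρ0.le (by linarith)
    nlinarith [h1, h2]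
  have hDlb : 0 < D1 * (1 - D1 - ρ ^ 2) := by
    apply mul_pos hD1; linarith
  have hDνpos : 0 < Dν := by nlinarith [lt_of_lt_of_le hDlb hkey]
  have hDub1 : Dν ≤ D1 * (1 - ρ ^ 2) := by nlinarith [mul_nonneg hδ.le (sq_nonneg (ν - ρ))]
  have hDub2 : Dν ≤ D1 * (1 - ν ^ 2 * (1 - D1)) := by nlinarith [sq_nonneg (ρ - ν * (1 - D1))]
  clear_value Dν
  have hκ' : (0:ℝ) ≤ 1 / κ := by positivity
  set A : ℝ := ((1 - ρ ^ 2) / Dν) ^ (1 / κ) with hA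
  set f : ℝ := ((1 - ν ^ 2 * (1 - D1)) / D2) ^ (1 / κ) with hf
  -- A ≥ D1 ^ (-1/κ)
  have hA1 : D1 ^ (-1 / κ) ≤ A := by
    have h : (1:ℝ) / D1 ≤ (1 - ρ ^ 2) / Dν := by
      rw [div_le_div_iff₀ hD1 hDνpos]; nlinarith
    have h2 := Real.rpow_le_rpow (by positivity) h hκ'
    calc D1 ^ (-1 / κ) = ((1:ℝ) / D1) ^ (1 / κ) := by
          rw [one_div D1, Real.inv_rpow hD1.le, ← Real.rpow_neg hD1.le, neg_div]
      _ ≤ A := h2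
  -- A ≤ Amax
  have hA2 : A ≤ ((1 - ρ ^ 2) * (1 - D1) / (D1 * (1 - D1 - ρ ^ 2))) ^ (1 / κ) := by
    apply Real.rpow_le_rpow (by positivity) _ hκ'
    rw [div_le_div_iff₀ hDνpos hDlb]
    refine le_trans (le_of_eq (by ring)) (le_trans (mul_le_mul_of_nonneg_left hkey hρ2.le) (le_of_eq (by ring)))
  -- f * A ≥ K
  have hfA : ((1 - ρ ^ 2) / (D1 * D2)) ^ (1 / κ) ≤ f * A := by
    rw [hf, hA, ← Real.mul_rpow (by positivity) (by positivity)]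
    apply Real.rpow_le_rpow (by positivity) _ hκ'
    rw [div_mul_div_comm, div_le_div_iff₀ (by positivity) (by positivity)]
    refine le_trans (le_of_eq (by ring))
      (le_trans (mul_le_mul_of_nonneg_left hDub2 (by positivity : (0:ℝ) ≤ (1 - ρ ^ 2) * D2))
        (le_of_eq (by ring)))
  have hApos : 0 < A := by positivity
  have e : N1 * (A - 1) + N2 * (f - 1) * A = N1 * (A - 1) + N2 * (f * A) - N2 * A := by ring
  rw [e]
  have l1 : N1 * (D1 ^ (-1 / κ) - 1) ≤ N1 * (A - 1) :=
    mul_le_mul_of_nonneg_left (by linarith) (by linarith)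
  have l2 : N2 * ((1 - ρ ^ 2) / (D1 * D2)) ^ (1 / κ) ≤ N2 * (f * A) :=
    mul_le_mul_of_nonneg_left hfA hN2.le
  have l3 : N2 * A ≤ N2 * ((1 - ρ ^ 2) * (1 - D1) / (D1 * (1 - D1 - ρ ^ 2))) ^ (1 / κ) :=
    mul_le_mul_of_nonneg_left hA2 hN2.le
  linarith


lemma mem_rho (ρ κ N1 N2 D1 D2 : ℝ) (hρ0 : 0 < ρ) (hρ1 : ρ < 1) (hD1 : 0 < D1) (hD1' : D1 < 1 - ρ ^ 2)
    (hD2' : D2 ≤ 1 - ρ ^ 2) :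
    ρ ∈ Set.Icc ρ (min (1 / ρ)
      (min (ρ / (1 - D1)) (Real.sqrt ((1 - D2) / (1 - D1))))) := by
  have hδ : 0 < 1 - D1 := by nlinarith [sq_nonneg ρ]
  refine ⟨le_refl _, le_min ?_ (le_min ?_ ?_)⟩
  · rw [le_div_iff₀ hρ0]; nlinarith
  · rw [le_div_iff₀ hδ]; nlinarith
  · rw [show ρ = √(ρ ^ 2) by rw [Real.sqrt_sq hρ0.le]]
    apply Real.sqrt_le_sqrt
    rw [le_div_iff₀ hδ]; nlinarith

lemma mem_rhodelta (ρ κ N1 N2 D1 D2 : ℝ) (hρ0 : 0 < ρ) (hρ1 : ρ < 1) (hD1 : 0 < D1) (hD1' : D1 < 1 - ρ ^ 2)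
    (hD2 : 0 < D2) (hD2c : D2 ≤ (1 - D1 - ρ ^ 2) / (1 - D1)) :
    ρ / (1 - D1) ∈ Set.Icc ρ (min (1 / ρ)
      (min (ρ / (1 - D1)) (Real.sqrt ((1 - D2) / (1 - D1))))) := by
  have hδ : 0 < 1 - D1 := by nlinarith [sq_nonneg ρ]
  have hc := (le_div_iff₀ hδ).mp hD2c
  refine ⟨?_, le_min ?_ (le_min (le_refl _) ?_)⟩
  · rw [le_div_iff₀ hδ]; nlinarith
  · rw [div_le_div_iff₀ hδ hρ0]; nlinarith
  · have hpos : 0 ≤ ρ / (1 - D1) := by positivity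
    rw [show ρ / (1 - D1) = √((ρ / (1 - D1)) ^ 2) by rw [Real.sqrt_sq hpos]]
    apply Real.sqrt_le_sqrt
    rw [div_pow, div_le_div_iff₀ (by positivity) hδ]
    nlinarith


lemma negdiv_rpow (κ x : ℝ) (hx : 0 < x) :
    x ^ (-1 / κ) = ((1:ℝ) / x) ^ (1 / κ) := by
  rw [one_div x, Real.inv_rpow hx.le, ← Real.rpow_neg hx.le, neg_div]


-- value of P at ν = ρ
lemma val_rho (ρ κ N1 N2 D1 D2 : ℝ) (hρ0 : 0 < ρ) (hρ1 : ρ < 1) (hκ : 0 < κ) (hD1 : 0 < D1) :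
    (fun ν : ℝ =>
        N1 * (((1 - ρ ^ 2) /
            (D1 * (1 - ν ^ 2 * (1 - D1)) - (ρ - ν * (1 - D1)) ^ 2)) ^ (1 / κ) - 1)
        + N2 * (((1 - ν ^ 2 * (1 - D1)) / D2) ^ (1 / κ) - 1)
          * ((1 - ρ ^ 2) /
            (D1 * (1 - ν ^ 2 * (1 - D1)) - (ρ - ν * (1 - D1)) ^ 2)) ^ (1 / κ)) ρ
    = N1 * (D1 ^ (-1 / κ) - 1)
        + N2 * (((1 - ρ ^ 2 * (1 - D1)) / D2) ^ (1 / κ) - 1) * D1 ^ (-1 / κ) := by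
  have hρ2 : (0:ℝ) < 1 - ρ ^ 2 := by nlinarith
  have e1 : D1 * (1 - ρ ^ 2 * (1 - D1)) - (ρ - ρ * (1 - D1)) ^ 2 = D1 * (1 - ρ ^ 2) := by
    ring
  have e2 : (1 - ρ ^ 2) / (D1 * (1 - ρ ^ 2)) = (1:ℝ) / D1 := by
    rw [eq_div_iff (by positivity)]; field_simp
  simp only [e1, e2, negdiv_rpow κ D1 hD1]

-- value of P at ν = ρ / (1 - D1)
lemma val_star (ρ κ N1 N2 D1 D2 : ℝ) (hρ0 : 0 < ρ) (hρ1 : ρ < 1) (hκ : 0 < κ) (hD1 : 0 < D1)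
    (hD1' : D1 < 1 - ρ ^ 2) :
    (fun ν : ℝ =>
        N1 * (((1 - ρ ^ 2) /
            (D1 * (1 - ν ^ 2 * (1 - D1)) - (ρ - ν * (1 - D1)) ^ 2)) ^ (1 / κ) - 1)
        + N2 * (((1 - ν ^ 2 * (1 - D1)) / D2) ^ (1 / κ) - 1)
          * ((1 - ρ ^ 2) /
            (D1 * (1 - ν ^ 2 * (1 - D1)) - (ρ - ν * (1 - D1)) ^ 2)) ^ (1 / κ))
      (ρ / (1 - D1))
    = N1 * (((1 - ρ ^ 2) * (1 - D1) / (D1 * (1 - D1 - ρ ^ 2))) ^ (1 / κ) - 1)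
        + N2 * (((1 - D1 - ρ ^ 2) / ((1 - D1) * D2)) ^ (1 / κ) - 1)
          * ((1 - ρ ^ 2) * (1 - D1) / (D1 * (1 - D1 - ρ ^ 2))) ^ (1 / κ) := by
  have hδ : 0 < 1 - D1 := by nlinarith [sq_nonneg ρ]
  have hδρ : 0 < 1 - D1 - ρ ^ 2 := by nlinarith
  have e1 : 1 - (ρ / (1 - D1)) ^ 2 * (1 - D1) = (1 - D1 - ρ ^ 2) / (1 - D1) := by
    field_simp
  have e0 : ρ - (ρ / (1 - D1)) * (1 - D1) = 0 := by field_simp; ring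
  have e2 : D1 * ((1 - D1 - ρ ^ 2) / (1 - D1)) - (0:ℝ) ^ 2
      = D1 * (1 - D1 - ρ ^ 2) / (1 - D1) := by ring
  have e3 : (1 - ρ ^ 2) / (D1 * (1 - D1 - ρ ^ 2) / (1 - D1))
      = (1 - ρ ^ 2) * (1 - D1) / (D1 * (1 - D1 - ρ ^ 2)) := by
    rw [div_div_eq_mul_div]
  have e4 : (1 - D1 - ρ ^ 2) / (1 - D1) / D2 = (1 - D1 - ρ ^ 2) / ((1 - D1) * D2) := by
    rw [div_div]
  simp only [e1, e0, e2, e3, e4]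


theorem sInf_bounds (ρ κ N1 N2 D1 D2 : ℝ) (hρ0 : 0 < ρ) (hρ1 : ρ < 1) (hκ : 0 < κ)
    (hN2 : 0 < N2) (hN : N2 ≤ N1) (hD1 : 0 < D1) (hD1' : D1 < 1 - ρ ^ 2)
    (hD2 : 0 < D2) (hD2' : D2 ≤ 1 - ρ ^ 2) :
    N1 * (D1 ^ (-1 / κ) - 1) + N2 * ((1 - ρ ^ 2) / (D1 * D2)) ^ (1 / κ)
        - N2 * ((1 - ρ ^ 2) * (1 - D1) / (D1 * (1 - D1 - ρ ^ 2))) ^ (1 / κ) ≤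
      sInf ((fun ν : ℝ =>
          N1 * (((1 - ρ ^ 2) /
              (D1 * (1 - ν ^ 2 * (1 - D1)) - (ρ - ν * (1 - D1)) ^ 2)) ^ (1 / κ) - 1)
          + N2 * (((1 - ν ^ 2 * (1 - D1)) / D2) ^ (1 / κ) - 1)
            * ((1 - ρ ^ 2) /
              (D1 * (1 - ν ^ 2 * (1 - D1)) - (ρ - ν * (1 - D1)) ^ 2)) ^ (1 / κ)) ''
        Set.Icc ρ (min (1 / ρ)
          (min (ρ / (1 - D1)) (Real.sqrt ((1 - D2) / (1 - D1)))))) ∧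
    sInf ((fun ν : ℝ =>
          N1 * (((1 - ρ ^ 2) /
              (D1 * (1 - ν ^ 2 * (1 - D1)) - (ρ - ν * (1 - D1)) ^ 2)) ^ (1 / κ) - 1)
          + N2 * (((1 - ν ^ 2 * (1 - D1)) / D2) ^ (1 / κ) - 1)
            * ((1 - ρ ^ 2) /
              (D1 * (1 - ν ^ 2 * (1 - D1)) - (ρ - ν * (1 - D1)) ^ 2)) ^ (1 / κ)) ''
        Set.Icc ρ (min (1 / ρ)
          (min (ρ / (1 - D1)) (Real.sqrt ((1 - D2) / (1 - D1)))))) ≤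
      N1 * (D1 ^ (-1 / κ) - 1)
        + N2 * (((1 - ρ ^ 2 * (1 - D1)) / D2) ^ (1 / κ) - 1) * D1 ^ (-1 / κ) := by
  have hbdd : BddBelow ((fun ν : ℝ =>
      N1 * (((1 - ρ ^ 2) /
          (D1 * (1 - ν ^ 2 * (1 - D1)) - (ρ - ν * (1 - D1)) ^ 2)) ^ (1 / κ) - 1)
      + N2 * (((1 - ν ^ 2 * (1 - D1)) / D2) ^ (1 / κ) - 1)
        * ((1 - ρ ^ 2) /
          (D1 * (1 - ν ^ 2 * (1 - D1)) - (ρ - ν * (1 - D1)) ^ 2)) ^ (1 / κ)) ''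
      Set.Icc ρ (min (1 / ρ)
        (min (ρ / (1 - D1)) (Real.sqrt ((1 - D2) / (1 - D1)))))) := by
    refine ⟨N1 * (D1 ^ (-1 / κ) - 1) + N2 * ((1 - ρ ^ 2) / (D1 * D2)) ^ (1 / κ)
      - N2 * ((1 - ρ ^ 2) * (1 - D1) / (D1 * (1 - D1 - ρ ^ 2))) ^ (1 / κ), ?_⟩
    rintro x ⟨ν, hν, rfl⟩
    exact point_lb ρ κ N1 N2 D1 D2 hρ0 hρ1 hκ hN2 hN hD1 hD1' hD2 ν hν
  have hmem := Set.mem_image_of_mem (fun ν : ℝ =>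
      N1 * (((1 - ρ ^ 2) /
          (D1 * (1 - ν ^ 2 * (1 - D1)) - (ρ - ν * (1 - D1)) ^ 2)) ^ (1 / κ) - 1)
      + N2 * (((1 - ν ^ 2 * (1 - D1)) / D2) ^ (1 / κ) - 1)
        * ((1 - ρ ^ 2) /
          (D1 * (1 - ν ^ 2 * (1 - D1)) - (ρ - ν * (1 - D1)) ^ 2)) ^ (1 / κ))
    (mem_rho ρ κ N1 N2 D1 D2 hρ0 hρ1 hD1 hD1' hD2')
  constructor
  · refine le_csInf ⟨_, hmem⟩ ?_
    rintro x ⟨ν, hν, rfl⟩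
    exact point_lb ρ κ N1 N2 D1 D2 hρ0 hρ1 hκ hN2 hN hD1 hD1' hD2 ν hν
  · exact le_trans (csInf_le hbdd hmem)
      (le_of_eq (val_rho ρ κ N1 N2 D1 D2 hρ0 hρ1 hκ hD1))

theorem sInf_ub_star (ρ κ N1 N2 D1 D2 : ℝ) (hρ0 : 0 < ρ) (hρ1 : ρ < 1) (hκ : 0 < κ)
    (hN2 : 0 < N2) (hN : N2 ≤ N1) (hD1 : 0 < D1) (hD1' : D1 < 1 - ρ ^ 2)
    (hD2 : 0 < D2) (hD2c : D2 ≤ (1 - D1 - ρ ^ 2) / (1 - D1)) :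
    sInf ((fun ν : ℝ =>
          N1 * (((1 - ρ ^ 2) /
              (D1 * (1 - ν ^ 2 * (1 - D1)) - (ρ - ν * (1 - D1)) ^ 2)) ^ (1 / κ) - 1)
          + N2 * (((1 - ν ^ 2 * (1 - D1)) / D2) ^ (1 / κ) - 1)
            * ((1 - ρ ^ 2) /
              (D1 * (1 - ν ^ 2 * (1 - D1)) - (ρ - ν * (1 - D1)) ^ 2)) ^ (1 / κ)) ''
        Set.Icc ρ (min (1 / ρ)
          (min (ρ / (1 - D1)) (Real.sqrt ((1 - D2) / (1 - D1)))))) ≤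
      N1 * (((1 - ρ ^ 2) * (1 - D1) / (D1 * (1 - D1 - ρ ^ 2))) ^ (1 / κ) - 1)
        + N2 * (((1 - D1 - ρ ^ 2) / ((1 - D1) * D2)) ^ (1 / κ) - 1)
          * ((1 - ρ ^ 2) * (1 - D1) / (D1 * (1 - D1 - ρ ^ 2))) ^ (1 / κ) := by
  have hbdd : BddBelow ((fun ν : ℝ =>
      N1 * (((1 - ρ ^ 2) /
          (D1 * (1 - ν ^ 2 * (1 - D1)) - (ρ - ν * (1 - D1)) ^ 2)) ^ (1 / κ) - 1)
      + N2 * (((1 - ν ^ 2 * (1 - D1)) / D2) ^ (1 / κ) - 1)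
        * ((1 - ρ ^ 2) /
          (D1 * (1 - ν ^ 2 * (1 - D1)) - (ρ - ν * (1 - D1)) ^ 2)) ^ (1 / κ)) ''
      Set.Icc ρ (min (1 / ρ)
        (min (ρ / (1 - D1)) (Real.sqrt ((1 - D2) / (1 - D1)))))) := by
    refine ⟨N1 * (D1 ^ (-1 / κ) - 1) + N2 * ((1 - ρ ^ 2) / (D1 * D2)) ^ (1 / κ)
      - N2 * ((1 - ρ ^ 2) * (1 - D1) / (D1 * (1 - D1 - ρ ^ 2))) ^ (1 / κ), ?_⟩
    rintro x ⟨ν, hν, rfl⟩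
    exact point_lb ρ κ N1 N2 D1 D2 hρ0 hρ1 hκ hN2 hN hD1 hD1' hD2 ν hν
  have hmem := Set.mem_image_of_mem (fun ν : ℝ =>
      N1 * (((1 - ρ ^ 2) /
          (D1 * (1 - ν ^ 2 * (1 - D1)) - (ρ - ν * (1 - D1)) ^ 2)) ^ (1 / κ) - 1)
      + N2 * (((1 - ν ^ 2 * (1 - D1)) / D2) ^ (1 / κ) - 1)
        * ((1 - ρ ^ 2) /
          (D1 * (1 - ν ^ 2 * (1 - D1)) - (ρ - ν * (1 - D1)) ^ 2)) ^ (1 / κ))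
    (mem_rhodelta ρ κ N1 N2 D1 D2 hρ0 hρ1 hD1 hD1' hD2 hD2c)
  exact le_trans (csInf_le hbdd hmem)
    (le_of_eq (val_star ρ κ N1 N2 D1 D2 hρ0 hρ1 hκ hD1 hD1'))


lemma rpow_cancel (κ x : ℝ) (hx : 0 < x) : x ^ (1 / κ) * x ^ (-1 / κ) = 1 := by
  rw [← Real.rpow_add hx, neg_div]
  norm_num

lemma mul_rpow_eq (κ x y z : ℝ) (hx : 0 ≤ x) (hy : 0 ≤ y) (e : x * y = z) :
    x ^ (1 / κ) * y ^ (1 / κ) = z ^ (1 / κ) := by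
  rw [← Real.mul_rpow hx hy, e]

lemma tendsto_rpow_zero (κ : ℝ) (hκ : 0 < κ) :
    Filter.Tendsto (fun x : ℝ => x ^ (1 / κ)) (nhdsWithin 0 (Set.Ioi 0)) (nhds 0) := by
  have h := (Real.continuousAt_rpow_const 0 (1 / κ) (Or.inr (by positivity))).tendsto
  rw [Real.zero_rpow (by positivity : (1:ℝ) / κ ≠ 0)] at h
  exact h.mono_left nhdsWithin_le_nhds

lemma pout_pos (ρ κ N1 N2 D1 D2 : ℝ) (hκ : 0 < κ) (hN2 : 0 < N2) (hN : N2 ≤ N1)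
    (hD1 : 0 < D1) (hD1' : D1 < 1) :
    0 < N1 * (D1 ^ (-1 / κ) - 1)
        + N2 * D1 ^ (-1 / κ) * max 0 (((1 - ρ ^ 2) / D2) ^ (1 / κ) - 1) := by
  have hneg : -1 / κ < 0 := div_neg_of_neg_of_pos (by norm_num) hκ
  have h1 : 1 < D1 ^ (-1 / κ) :=
    (Real.one_lt_rpow_iff_of_pos hD1).mpr (Or.inr ⟨hD1', hneg⟩)
  have h2 : 0 ≤ N2 * D1 ^ (-1 / κ) * max 0 (((1 - ρ ^ 2) / D2) ^ (1 / κ) - 1) :=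
    mul_nonneg (mul_nonneg hN2.le (Real.rpow_nonneg hD1.le _)) (le_max_left _ _)
  nlinarith


theorem part1 (ρ κ N1 N2 D2 : ℝ) (hρ0 : 0 < ρ) (hρ1 : ρ < 1) (hκ : 0 < κ)
    (hN2 : 0 < N2) (hN : N2 ≤ N1) (hD2 : 0 < D2) (hD2' : D2 ≤ 1 - ρ ^ 2) :
    Filter.Tendsto (fun D1 : ℝ =>
      sInf ((fun ν : ℝ =>
          N1 * (((1 - ρ ^ 2) /
              (D1 * (1 - ν ^ 2 * (1 - D1)) - (ρ - ν * (1 - D1)) ^ 2)) ^ (1 / κ) - 1)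
          + N2 * (((1 - ν ^ 2 * (1 - D1)) / D2) ^ (1 / κ) - 1)
            * ((1 - ρ ^ 2) /
              (D1 * (1 - ν ^ 2 * (1 - D1)) - (ρ - ν * (1 - D1)) ^ 2)) ^ (1 / κ)) ''
        Set.Icc ρ (min (1 / ρ)
          (min (ρ / (1 - D1)) (Real.sqrt ((1 - D2) / (1 - D1)))))) /
      (N1 * (D1 ^ (-1 / κ) - 1)
        + N2 * D1 ^ (-1 / κ) * max 0 (((1 - ρ ^ 2) / D2) ^ (1 / κ) - 1)))
      (nhdsWithin 0 (Set.Ioi 0)) (nhds 1) := by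
  have hρ2 : (0:ℝ) < 1 - ρ ^ 2 := by nlinarith
  have hIoo : Set.Ioo (0:ℝ) (1 - ρ ^ 2) ∈ nhdsWithin (0:ℝ) (Set.Ioi 0) :=
    Ioo_mem_nhdsGT_of_mem ⟨le_refl _, hρ2⟩
  have hc2ge : (1:ℝ) ≤ ((1 - ρ ^ 2) / D2) ^ (1 / κ) := by
    calc (1:ℝ) = (1:ℝ) ^ (1 / κ) := (Real.one_rpow _).symm
      _ ≤ _ := Real.rpow_le_rpow zero_le_one ((one_le_div hD2).mpr hD2') (by positivity)
  have hmax : max 0 (((1 - ρ ^ 2) / D2) ^ (1 / κ) - 1)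
      = ((1 - ρ ^ 2) / D2) ^ (1 / κ) - 1 := max_eq_right (by linarith)
  have hℓ : (0:ℝ) < N1 + N2 * (((1 - ρ ^ 2) / D2) ^ (1 / κ) - 1) := by nlinarith
  -- limit of t^{1/κ} * (1 - t^{1/κ}-type constants): base tendsto facts
  have hT0 : Filter.Tendsto (fun t : ℝ => t ^ (1 / κ)) (nhdsWithin 0 (Set.Ioi 0)) (nhds 0) :=
    tendsto_rpow_zero κ hκ
  -- denominator limit
  have hPden : Filter.Tendsto (fun t : ℝ => t ^ (1 / κ) *
      (N1 * (t ^ (-1 / κ) - 1)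
        + N2 * t ^ (-1 / κ) * max 0 (((1 - ρ ^ 2) / D2) ^ (1 / κ) - 1)))
      (nhdsWithin 0 (Set.Ioi 0))
      (nhds (N1 + N2 * (((1 - ρ ^ 2) / D2) ^ (1 / κ) - 1))) := by
    have hG : Filter.Tendsto (fun t : ℝ =>
        N1 * (1 - t ^ (1 / κ)) + N2 * (((1 - ρ ^ 2) / D2) ^ (1 / κ) - 1))
        (nhdsWithin 0 (Set.Ioi 0))
        (nhds (N1 * (1 - 0) + N2 * (((1 - ρ ^ 2) / D2) ^ (1 / κ) - 1))) :=
      ((tendsto_const_nhds.sub hT0).const_mul N1).add tendsto_const_nhds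
    rw [show N1 * (1 - 0) + N2 * (((1 - ρ ^ 2) / D2) ^ (1 / κ) - 1)
        = N1 + N2 * (((1 - ρ ^ 2) / D2) ^ (1 / κ) - 1) by ring] at hG
    refine hG.congr' ?_
    filter_upwards [self_mem_nhdsWithin] with t ht
    have hX := rpow_cancel κ t ht
    rw [hmax]
    linear_combination (-(N1 + N2 * (((1 - ρ ^ 2) / D2) ^ (1 / κ) - 1))) * hX
  -- lower bound numerator limit
  have hLnum : Filter.Tendsto (fun t : ℝ => t ^ (1 / κ) *
      (N1 * (t ^ (-1 / κ) - 1) + N2 * ((1 - ρ ^ 2) / (t * D2)) ^ (1 / κ)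
        - N2 * ((1 - ρ ^ 2) * (1 - t) / (t * (1 - t - ρ ^ 2))) ^ (1 / κ)))
      (nhdsWithin 0 (Set.Ioi 0))
      (nhds (N1 + N2 * (((1 - ρ ^ 2) / D2) ^ (1 / κ) - 1))) := by
    have hinner : Filter.Tendsto (fun t : ℝ => (1 - ρ ^ 2) * (1 - t) / (1 - t - ρ ^ 2))
        (nhds 0) (nhds ((1 - ρ ^ 2) * (1 - 0) / (1 - 0 - ρ ^ 2))) := by
      apply ContinuousAt.tendsto
      apply ContinuousAt.div (by fun_prop) (by fun_prop)
      norm_num; nlinarith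
    rw [show (1 - ρ ^ 2) * (1 - 0) / (1 - 0 - ρ ^ 2) = (1:ℝ) by
      rw [sub_zero, mul_one]; exact div_self (ne_of_gt hρ2)] at hinner
    have hinner2 : Filter.Tendsto
        (fun t : ℝ => ((1 - ρ ^ 2) * (1 - t) / (1 - t - ρ ^ 2)) ^ (1 / κ))
        (nhdsWithin 0 (Set.Ioi 0)) (nhds 1) := by
      have := (hinner.rpow_const (p := 1 / κ) (Or.inl one_ne_zero)).mono_left
        (nhdsWithin_le_nhds (s := Set.Ioi (0:ℝ)))
      rwa [Real.one_rpow] at this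
    have hG : Filter.Tendsto (fun t : ℝ =>
        N1 * (1 - t ^ (1 / κ)) + N2 * ((1 - ρ ^ 2) / D2) ^ (1 / κ)
          - N2 * ((1 - ρ ^ 2) * (1 - t) / (1 - t - ρ ^ 2)) ^ (1 / κ))
        (nhdsWithin 0 (Set.Ioi 0))
        (nhds (N1 * (1 - 0) + N2 * ((1 - ρ ^ 2) / D2) ^ (1 / κ) - N2 * 1)) :=
      (((tendsto_const_nhds.sub hT0).const_mul N1).add tendsto_const_nhds).sub
        (hinner2.const_mul N2)
    rw [show N1 * (1 - 0) + N2 * ((1 - ρ ^ 2) / D2) ^ (1 / κ) - N2 * 1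
        = N1 + N2 * (((1 - ρ ^ 2) / D2) ^ (1 / κ) - 1) by ring] at hG
    refine hG.congr' ?_
    filter_upwards [hIoo] with t ht
    obtain ⟨ht0, ht1⟩ := ht
    have hX := rpow_cancel κ t ht0
    have hE1 : t ^ (1 / κ) * ((1 - ρ ^ 2) / (t * D2)) ^ (1 / κ)
        = ((1 - ρ ^ 2) / D2) ^ (1 / κ) := by
      apply mul_rpow_eq κ t _ _ ht0.le (by positivity)
      rw [← mul_div_assoc, mul_div_mul_left _ _ (ne_of_gt ht0)]
    have hE2 : t ^ (1 / κ) * ((1 - ρ ^ 2) * (1 - t) / (t * (1 - t - ρ ^ 2))) ^ (1 / κ)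
        = ((1 - ρ ^ 2) * (1 - t) / (1 - t - ρ ^ 2)) ^ (1 / κ) := by
      apply mul_rpow_eq κ t _ _ ht0.le
      · exact le_of_lt (div_pos (by nlinarith) (by nlinarith))
      · rw [← mul_div_assoc, mul_div_mul_left _ _ (ne_of_gt ht0)]
    linear_combination (-N1) * hX + (-N2) * hE1 + N2 * hE2
  -- upper bound numerator limit
  have hUnum : Filter.Tendsto (fun t : ℝ => t ^ (1 / κ) *
      (N1 * (t ^ (-1 / κ) - 1)
        + N2 * (((1 - ρ ^ 2 * (1 - t)) / D2) ^ (1 / κ) - 1) * t ^ (-1 / κ)))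
      (nhdsWithin 0 (Set.Ioi 0))
      (nhds (N1 + N2 * (((1 - ρ ^ 2) / D2) ^ (1 / κ) - 1))) := by
    have hinner : Filter.Tendsto (fun t : ℝ => (1 - ρ ^ 2 * (1 - t)) / D2)
        (nhds 0) (nhds ((1 - ρ ^ 2 * (1 - 0)) / D2)) := by
      apply ContinuousAt.tendsto
      exact ContinuousAt.div (by fun_prop) (by fun_prop) (ne_of_gt hD2)
    have hinner2 : Filter.Tendsto
        (fun t : ℝ => ((1 - ρ ^ 2 * (1 - t)) / D2) ^ (1 / κ))
        (nhdsWithin 0 (Set.Ioi 0)) (nhds (((1 - ρ ^ 2) / D2) ^ (1 / κ))) := by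
      have hb : (0:ℝ) < (1 - ρ ^ 2 * (1 - 0)) / D2 := by
        apply div_pos (by nlinarith) hD2
      have h2 := (hinner.rpow_const (p := 1 / κ) (Or.inl (ne_of_gt hb))).mono_left
        (nhdsWithin_le_nhds (s := Set.Ioi (0:ℝ)))
      norm_num at h2 ⊢
      exact h2
    have hG : Filter.Tendsto (fun t : ℝ =>
        N1 * (1 - t ^ (1 / κ)) + N2 * (((1 - ρ ^ 2 * (1 - t)) / D2) ^ (1 / κ) - 1))
        (nhdsWithin 0 (Set.Ioi 0))
        (nhds (N1 * (1 - 0) + N2 * (((1 - ρ ^ 2) / D2) ^ (1 / κ) - 1))) :=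
      (((tendsto_const_nhds.sub hT0).const_mul N1).add
        ((hinner2.sub tendsto_const_nhds).const_mul N2))
    rw [show N1 * (1 - 0) + N2 * (((1 - ρ ^ 2) / D2) ^ (1 / κ) - 1)
        = N1 + N2 * (((1 - ρ ^ 2) / D2) ^ (1 / κ) - 1) by ring] at hG
    refine hG.congr' ?_
    filter_upwards [self_mem_nhdsWithin] with t ht
    have hX := rpow_cancel κ t ht
    linear_combination (-(N1 + N2 * (((1 - ρ ^ 2 * (1 - t)) / D2) ^ (1 / κ) - 1))) * hX
  -- ratio limits
  have hdivlo : Filter.Tendsto (fun t : ℝ =>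
      (N1 * (t ^ (-1 / κ) - 1) + N2 * ((1 - ρ ^ 2) / (t * D2)) ^ (1 / κ)
        - N2 * ((1 - ρ ^ 2) * (1 - t) / (t * (1 - t - ρ ^ 2))) ^ (1 / κ)) /
      (N1 * (t ^ (-1 / κ) - 1)
        + N2 * t ^ (-1 / κ) * max 0 (((1 - ρ ^ 2) / D2) ^ (1 / κ) - 1)))
      (nhdsWithin 0 (Set.Ioi 0)) (nhds 1) := by
    have h := hLnum.div hPden (ne_of_gt hℓ)
    rw [div_self (ne_of_gt hℓ)] at h
    refine h.congr' ?_
    filter_upwards [self_mem_nhdsWithin] with t ht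
    exact mul_div_mul_left _ _ (ne_of_gt (Real.rpow_pos_of_pos ht _))
  have hdivhi : Filter.Tendsto (fun t : ℝ =>
      (N1 * (t ^ (-1 / κ) - 1)
        + N2 * (((1 - ρ ^ 2 * (1 - t)) / D2) ^ (1 / κ) - 1) * t ^ (-1 / κ)) /
      (N1 * (t ^ (-1 / κ) - 1)
        + N2 * t ^ (-1 / κ) * max 0 (((1 - ρ ^ 2) / D2) ^ (1 / κ) - 1)))
      (nhdsWithin 0 (Set.Ioi 0)) (nhds 1) := by
    have h := hUnum.div hPden (ne_of_gt hℓ)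
    rw [div_self (ne_of_gt hℓ)] at h
    refine h.congr' ?_
    filter_upwards [self_mem_nhdsWithin] with t ht
    exact mul_div_mul_left _ _ (ne_of_gt (Real.rpow_pos_of_pos ht _))
  -- squeeze
  refine tendsto_of_tendsto_of_tendsto_of_le_of_le' hdivlo hdivhi ?_ ?_
  · filter_upwards [hIoo] with t ht
    obtain ⟨ht0, ht1⟩ := ht
    have hP := pout_pos ρ κ N1 N2 t D2 hκ hN2 hN ht0 (by nlinarith)
    have hb := (sInf_bounds ρ κ N1 N2 t D2 hρ0 hρ1 hκ hN2 hN ht0 ht1 hD2 hD2').1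
    exact div_le_div_of_nonneg_right hb hP.le
  · filter_upwards [hIoo] with t ht
    obtain ⟨ht0, ht1⟩ := ht
    have hP := pout_pos ρ κ N1 N2 t D2 hκ hN2 hN ht0 (by nlinarith)
    have hb := (sInf_bounds ρ κ N1 N2 t D2 hρ0 hρ1 hκ hN2 hN ht0 ht1 hD2 hD2').2
    exact div_le_div_of_nonneg_right hb hP.le


theorem part2 (ρ κ N1 N2 D1 : ℝ) (hρ0 : 0 < ρ) (hρ1 : ρ < 1) (hκ : 0 < κ)
    (hN2 : 0 < N2) (hN : N2 ≤ N1) (hD1 : 0 < D1) (hD1' : D1 < 1 - ρ ^ 2) :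
    Filter.Tendsto (fun D2 : ℝ =>
      sInf ((fun ν : ℝ =>
          N1 * (((1 - ρ ^ 2) /
              (D1 * (1 - ν ^ 2 * (1 - D1)) - (ρ - ν * (1 - D1)) ^ 2)) ^ (1 / κ) - 1)
          + N2 * (((1 - ν ^ 2 * (1 - D1)) / D2) ^ (1 / κ) - 1)
            * ((1 - ρ ^ 2) /
              (D1 * (1 - ν ^ 2 * (1 - D1)) - (ρ - ν * (1 - D1)) ^ 2)) ^ (1 / κ)) ''
        Set.Icc ρ (min (1 / ρ)
          (min (ρ / (1 - D1)) (Real.sqrt ((1 - D2) / (1 - D1)))))) /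
      (N1 * (D1 ^ (-1 / κ) - 1)
        + N2 * D1 ^ (-1 / κ) * max 0 (((1 - ρ ^ 2) / D2) ^ (1 / κ) - 1)))
      (nhdsWithin 0 (Set.Ioi 0)) (nhds 1) := by
  have hρ2 : (0:ℝ) < 1 - ρ ^ 2 := by nlinarith
  have hδ : (0:ℝ) < 1 - D1 := by nlinarith [sq_nonneg ρ]
  have hδρ : (0:ℝ) < 1 - D1 - ρ ^ 2 := by nlinarith
  have hε : (0:ℝ) < min (1 - ρ ^ 2) ((1 - D1 - ρ ^ 2) / (1 - D1)) :=
    lt_min hρ2 (div_pos hδρ hδ)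
  have hIoo : Set.Ioo (0:ℝ) (min (1 - ρ ^ 2) ((1 - D1 - ρ ^ 2) / (1 - D1)))
      ∈ nhdsWithin (0:ℝ) (Set.Ioi 0) := Ioo_mem_nhdsGT_of_mem ⟨le_refl _, hε⟩
  set Am : ℝ := ((1 - ρ ^ 2) * (1 - D1) / (D1 * (1 - D1 - ρ ^ 2))) ^ (1 / κ) with hAm
  have hAmpos : 0 < Am := Real.rpow_pos_of_pos (by positivity) _
  have hKeq : ((1 - ρ ^ 2) / D1) ^ (1 / κ) = (1 - ρ ^ 2) ^ (1 / κ) * D1 ^ (-1 / κ) := by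
    rw [Real.div_rpow hρ2.le hD1.le, neg_div, Real.rpow_neg hD1.le, div_eq_mul_inv]
  have hAmK : Am * ((1 - D1 - ρ ^ 2) / (1 - D1)) ^ (1 / κ)
      = ((1 - ρ ^ 2) / D1) ^ (1 / κ) := by
    rw [hAm]
    apply mul_rpow_eq κ _ _ _ (by positivity) (by positivity)
    field_simp
  have hℓ2 : (0:ℝ) < N2 * ((1 - ρ ^ 2) / D1) ^ (1 / κ) :=
    mul_pos hN2 (Real.rpow_pos_of_pos (by positivity) _)
  have hT0 : Filter.Tendsto (fun t : ℝ => t ^ (1 / κ)) (nhdsWithin 0 (Set.Ioi 0)) (nhds 0) :=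
    tendsto_rpow_zero κ hκ
  -- denominator
  have hPden : Filter.Tendsto (fun t : ℝ => t ^ (1 / κ) *
      (N1 * (D1 ^ (-1 / κ) - 1)
        + N2 * D1 ^ (-1 / κ) * max 0 (((1 - ρ ^ 2) / t) ^ (1 / κ) - 1)))
      (nhdsWithin 0 (Set.Ioi 0)) (nhds (N2 * ((1 - ρ ^ 2) / D1) ^ (1 / κ))) := by
    have hG : Filter.Tendsto (fun t : ℝ =>
        N1 * (D1 ^ (-1 / κ) - 1) * t ^ (1 / κ)
          + N2 * D1 ^ (-1 / κ) * ((1 - ρ ^ 2) ^ (1 / κ) - t ^ (1 / κ)))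
        (nhdsWithin 0 (Set.Ioi 0))
        (nhds (N1 * (D1 ^ (-1 / κ) - 1) * 0
          + N2 * D1 ^ (-1 / κ) * ((1 - ρ ^ 2) ^ (1 / κ) - 0))) :=
      ((hT0.const_mul _).add ((tendsto_const_nhds.sub hT0).const_mul _))
    rw [show N1 * (D1 ^ (-1 / κ) - 1) * 0
          + N2 * D1 ^ (-1 / κ) * ((1 - ρ ^ 2) ^ (1 / κ) - 0)
        = N2 * ((1 - ρ ^ 2) / D1) ^ (1 / κ) by rw [hKeq]; ring] at hG
    refine hG.congr' ?_
    filter_upwards [hIoo] with t ht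
    obtain ⟨ht0, htε⟩ := ht
    have ht1 : t ≤ 1 - ρ ^ 2 := (lt_of_lt_of_le htε (min_le_left _ _)).le
    have hge : (1:ℝ) ≤ ((1 - ρ ^ 2) / t) ^ (1 / κ) := by
      calc (1:ℝ) = (1:ℝ) ^ (1 / κ) := (Real.one_rpow _).symm
        _ ≤ _ := Real.rpow_le_rpow zero_le_one ((one_le_div ht0).mpr ht1) (by positivity)
    rw [max_eq_right (by linarith)]
    have hE5 : t ^ (1 / κ) * ((1 - ρ ^ 2) / t) ^ (1 / κ) = (1 - ρ ^ 2) ^ (1 / κ) := by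
      apply mul_rpow_eq κ t _ _ ht0.le (by positivity)
      rw [mul_div_cancel₀ _ (ne_of_gt ht0)]
    linear_combination (-(N2 * D1 ^ (-1 / κ))) * hE5
  -- lower bound numerator
  have hLnum : Filter.Tendsto (fun t : ℝ => t ^ (1 / κ) *
      (N1 * (D1 ^ (-1 / κ) - 1) + N2 * ((1 - ρ ^ 2) / (D1 * t)) ^ (1 / κ) - N2 * Am))
      (nhdsWithin 0 (Set.Ioi 0)) (nhds (N2 * ((1 - ρ ^ 2) / D1) ^ (1 / κ))) := by
    have hG : Filter.Tendsto (fun t : ℝ =>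
        (N1 * (D1 ^ (-1 / κ) - 1) - N2 * Am) * t ^ (1 / κ)
          + N2 * ((1 - ρ ^ 2) / D1) ^ (1 / κ))
        (nhdsWithin 0 (Set.Ioi 0))
        (nhds ((N1 * (D1 ^ (-1 / κ) - 1) - N2 * Am) * 0
          + N2 * ((1 - ρ ^ 2) / D1) ^ (1 / κ))) :=
      ((hT0.const_mul _).add tendsto_const_nhds)
    rw [show (N1 * (D1 ^ (-1 / κ) - 1) - N2 * Am) * 0
          + N2 * ((1 - ρ ^ 2) / D1) ^ (1 / κ)
        = N2 * ((1 - ρ ^ 2) / D1) ^ (1 / κ) by ring] at hG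
    refine hG.congr' ?_
    filter_upwards [self_mem_nhdsWithin] with t ht0
    have hE6 : t ^ (1 / κ) * ((1 - ρ ^ 2) / (D1 * t)) ^ (1 / κ)
        = ((1 - ρ ^ 2) / D1) ^ (1 / κ) := by
      apply mul_rpow_eq κ t _ _ (le_of_lt ht0) (le_of_lt (div_pos hρ2 (mul_pos hD1 ht0)))
      rw [mul_comm D1 t, ← mul_div_assoc, mul_div_mul_left _ _ (ne_of_gt ht0)]
    linear_combination (-N2) * hE6
  -- upper bound numerator
  have hUnum : Filter.Tendsto (fun t : ℝ => t ^ (1 / κ) *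
      (N1 * (Am - 1) + N2 * (((1 - D1 - ρ ^ 2) / ((1 - D1) * t)) ^ (1 / κ) - 1) * Am))
      (nhdsWithin 0 (Set.Ioi 0)) (nhds (N2 * ((1 - ρ ^ 2) / D1) ^ (1 / κ))) := by
    have hG : Filter.Tendsto (fun t : ℝ =>
        (N1 * (Am - 1) - N2 * Am) * t ^ (1 / κ)
          + N2 * ((1 - ρ ^ 2) / D1) ^ (1 / κ))
        (nhdsWithin 0 (Set.Ioi 0))
        (nhds ((N1 * (Am - 1) - N2 * Am) * 0
          + N2 * ((1 - ρ ^ 2) / D1) ^ (1 / κ))) :=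
      ((hT0.const_mul _).add tendsto_const_nhds)
    rw [show (N1 * (Am - 1) - N2 * Am) * 0 + N2 * ((1 - ρ ^ 2) / D1) ^ (1 / κ)
        = N2 * ((1 - ρ ^ 2) / D1) ^ (1 / κ) by ring] at hG
    refine hG.congr' ?_
    filter_upwards [self_mem_nhdsWithin] with t ht0
    have hE7 : t ^ (1 / κ) * ((1 - D1 - ρ ^ 2) / ((1 - D1) * t)) ^ (1 / κ)
        = ((1 - D1 - ρ ^ 2) / (1 - D1)) ^ (1 / κ) := by
      apply mul_rpow_eq κ t _ _ (le_of_lt ht0) (le_of_lt (div_pos hδρ (mul_pos hδ ht0)))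
      rw [mul_comm (1 - D1) t, ← mul_div_assoc, mul_div_mul_left _ _ (ne_of_gt ht0)]
    linear_combination (-(N2 * Am)) * hE7 + (-N2) * hAmK
  -- ratio limits
  have hdivlo : Filter.Tendsto (fun t : ℝ =>
      (N1 * (D1 ^ (-1 / κ) - 1) + N2 * ((1 - ρ ^ 2) / (D1 * t)) ^ (1 / κ) - N2 * Am) /
      (N1 * (D1 ^ (-1 / κ) - 1)
        + N2 * D1 ^ (-1 / κ) * max 0 (((1 - ρ ^ 2) / t) ^ (1 / κ) - 1)))
      (nhdsWithin 0 (Set.Ioi 0)) (nhds 1) := by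
    have h := hLnum.div hPden (ne_of_gt hℓ2)
    rw [div_self (ne_of_gt hℓ2)] at h
    refine h.congr' ?_
    filter_upwards [self_mem_nhdsWithin] with t ht
    exact mul_div_mul_left _ _ (ne_of_gt (Real.rpow_pos_of_pos ht _))
  have hdivhi : Filter.Tendsto (fun t : ℝ =>
      (N1 * (Am - 1) + N2 * (((1 - D1 - ρ ^ 2) / ((1 - D1) * t)) ^ (1 / κ) - 1) * Am) /
      (N1 * (D1 ^ (-1 / κ) - 1)
        + N2 * D1 ^ (-1 / κ) * max 0 (((1 - ρ ^ 2) / t) ^ (1 / κ) - 1)))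
      (nhdsWithin 0 (Set.Ioi 0)) (nhds 1) := by
    have h := hUnum.div hPden (ne_of_gt hℓ2)
    rw [div_self (ne_of_gt hℓ2)] at h
    refine h.congr' ?_
    filter_upwards [self_mem_nhdsWithin] with t ht
    exact mul_div_mul_left _ _ (ne_of_gt (Real.rpow_pos_of_pos ht _))
  -- squeeze
  refine tendsto_of_tendsto_of_tendsto_of_le_of_le' hdivlo hdivhi ?_ ?_
  · filter_upwards [hIoo] with t ht
    obtain ⟨ht0, htε⟩ := ht
    have ht1 : t ≤ 1 - ρ ^ 2 := (lt_of_lt_of_le htε (min_le_left _ _)).le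
    have hP := pout_pos ρ κ N1 N2 D1 t hκ hN2 hN hD1 (by nlinarith)
    have hb := (sInf_bounds ρ κ N1 N2 D1 t hρ0 hρ1 hκ hN2 hN hD1 hD1' ht0 ht1).1
    exact div_le_div_of_nonneg_right hb hP.le
  · filter_upwards [hIoo] with t ht
    obtain ⟨ht0, htε⟩ := ht
    have ht2 : t ≤ (1 - D1 - ρ ^ 2) / (1 - D1) :=
      (lt_of_lt_of_le htε (min_le_right _ _)).le
    have hP := pout_pos ρ κ N1 N2 D1 t hκ hN2 hN hD1 (by nlinarith)
    have hb := sInf_ub_star ρ κ N1 N2 D1 t hρ0 hρ1 hκ hN2 hN hD1 hD1' ht0 ht2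
    exact div_le_div_of_nonneg_right hb hP.le


/-- Fix `ρ ∈ (0,1)`, `κ > 0`, `N1 ≥ N2 > 0`. With `δ := 1−D1`,
`A(ν) := ((1−ρ²)/(D1(1−ν²δ) − (ρ−νδ)²))^{1/κ}`,
`P(ν) := N1(A(ν) − 1) + N2(((1−ν²δ)/D2)^{1/κ} − 1)·A(ν)`,
`P_sep := inf{P(ν) : ν ∈ [ρ, min(1/ρ, ρ/δ, √((1−D2)/δ))]}` and
`P_outer := N1(D1^{−1/κ} − 1) + N2·D1^{−1/κ}·max{0, ((1−ρ²)/D2)^{1/κ} − 1}`: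
(1) for every fixed `D2 ∈ (0, 1−ρ²]`, `P_sep/P_outer → 1` as `D1 → 0⁺`; and
(2) for every fixed `D1 ∈ (0, 1−ρ²)`, `P_sep/P_outer → 1` as `D2 → 0⁺`. -/
theorem separate_coding_optimal_low_distortion (ρ κ N1 N2 : ℝ)
    (hρ : ρ ∈ Set.Ioo (0 : ℝ) 1) (hκ : 0 < κ) (hN2 : 0 < N2) (hN : N2 ≤ N1) :
    (∀ D2 ∈ Set.Ioc (0 : ℝ) (1 - ρ ^ 2),
      Filter.Tendsto (fun D1 : ℝ =>
        sInf ((fun ν : ℝ =>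
            N1 * (((1 - ρ ^ 2) /
                (D1 * (1 - ν ^ 2 * (1 - D1)) - (ρ - ν * (1 - D1)) ^ 2)) ^ (1 / κ) - 1)
            + N2 * (((1 - ν ^ 2 * (1 - D1)) / D2) ^ (1 / κ) - 1)
              * ((1 - ρ ^ 2) /
                (D1 * (1 - ν ^ 2 * (1 - D1)) - (ρ - ν * (1 - D1)) ^ 2)) ^ (1 / κ)) ''
          Set.Icc ρ (min (1 / ρ)
            (min (ρ / (1 - D1)) (Real.sqrt ((1 - D2) / (1 - D1)))))) /
        (N1 * (D1 ^ (-1 / κ) - 1)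
          + N2 * D1 ^ (-1 / κ) * max 0 (((1 - ρ ^ 2) / D2) ^ (1 / κ) - 1)))
        (nhdsWithin 0 (Set.Ioi 0)) (nhds 1)) ∧
    (∀ D1 ∈ Set.Ioo (0 : ℝ) (1 - ρ ^ 2),
      Filter.Tendsto (fun D2 : ℝ =>
        sInf ((fun ν : ℝ =>
            N1 * (((1 - ρ ^ 2) /
                (D1 * (1 - ν ^ 2 * (1 - D1)) - (ρ - ν * (1 - D1)) ^ 2)) ^ (1 / κ) - 1)
            + N2 * (((1 - ν ^ 2 * (1 - D1)) / D2) ^ (1 / κ) - 1)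
              * ((1 - ρ ^ 2) /
                (D1 * (1 - ν ^ 2 * (1 - D1)) - (ρ - ν * (1 - D1)) ^ 2)) ^ (1 / κ)) ''
          Set.Icc ρ (min (1 / ρ)
            (min (ρ / (1 - D1)) (Real.sqrt ((1 - D2) / (1 - D1)))))) /
        (N1 * (D1 ^ (-1 / κ) - 1)
          + N2 * D1 ^ (-1 / κ) * max 0 (((1 - ρ ^ 2) / D2) ^ (1 / κ) - 1)))
        (nhdsWithin 0 (Set.Ioi 0)) (nhds 1)) := by
  obtain ⟨hρ0, hρ1⟩ := hρ
  constructor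
  · intro D2 hD2
    exact part1 ρ κ N1 N2 D2 hρ0 hρ1 hκ hN2 hN hD2.1 hD2.2
  · intro D1 hD1
    exact part2 ρ κ N1 N2 D1 hρ0 hρ1 hκ hN2 hN hD1.1 hD1.2
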